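/- Let X be a real Hilbert space, a : X × X → ℝ a bounded bilinear form, and T : X → X a bounded linear isomorphism such that a(x, T x) ≥ C ‖x‖² for all x ∈ X with some C > 0 (T-coercivity). Then the bounded linear operator A : X → X defined by ⟨A x, y⟩ = a(x, y) is invertible. -/
import Mathlib


open scoped RealInnerProductSpace

theorem stmt_9 {X : Type*} [NormedAddCommGroup X] [InnerProductSpace ℝ X] [CompleteSpace X]
    (a : X →L[ℝ] X →L[ℝ] ℝ) (T : X ≃L[ℝ] X) (C : ℝ) (hC : 0 < C)
    (hcoer : ∀ x : X, C * ‖x‖ ^ 2 ≤ a x (T x))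
    (A : X →L[ℝ] X) (hA : ∀ x y : X, ⟪A x, y⟫ = a x y) :
    Function.Bijective A := by
  set b : X →L[ℝ] X →L[ℝ] ℝ := (a.flip.comp (T : X →L[ℝ] X)).flip with hb
  have hbapp : ∀ x y : X, b x y = a x (T y) := fun x y => rfl
  have hbcoer : IsCoercive b := by
    refine ⟨C, hC, fun u => ?_⟩
    have := hcoer u
    rwa [sq, ← mul_assoc] at this
  set Td : X →L[ℝ] X := ContinuousLinearMap.adjoint (T : X →L[ℝ] X) with hTd
  have hTdA : ∀ x : X, Td (A x) = hbcoer.continuousLinearEquivOfBilin x := by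
    intro x
    apply hbcoer.unique_continuousLinearEquivOfBilin
    intro w
    rw [hTd, ContinuousLinearMap.adjoint_inner_left, hA]; rfl
  have hTdbij : Function.Bijective Td := by
    have h1 : Td ∘L ContinuousLinearMap.adjoint (T.symm : X →L[ℝ] X) = ContinuousLinearMap.id ℝ X := by
      rw [hTd, ← ContinuousLinearMap.adjoint_comp]
      have : (T.symm : X →L[ℝ] X) ∘L (T : X →L[ℝ] X) = ContinuousLinearMap.id ℝ X := by
        ext x; simp
      rw [this, ContinuousLinearMap.adjoint_id]
    have h2 : ContinuousLinearMap.adjoint (T.symm : X →L[ℝ] X) ∘L Td = ContinuousLinearMap.id ℝ X := by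
      rw [hTd, ← ContinuousLinearMap.adjoint_comp]
      have : (T : X →L[ℝ] X) ∘L (T.symm : X →L[ℝ] X) = ContinuousLinearMap.id ℝ X := by
        ext x; simp
      rw [this, ContinuousLinearMap.adjoint_id]
    constructor
    · intro u v huv
      have := congrArg (fun f => f u) h2
      have h2' := congrArg (ContinuousLinearMap.adjoint (T.symm : X →L[ℝ] X)) huv
      calc u = ContinuousLinearMap.adjoint (T.symm : X →L[ℝ] X) (Td u) := by
              have := congrArg (fun f => f u) h2; simpa using this.symm
        _ = ContinuousLinearMap.adjoint (T.symm : X →L[ℝ] X) (Td v) := h2'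
        _ = v := by have := congrArg (fun f => f v) h2; simpa using this
    · intro y
      refine ⟨ContinuousLinearMap.adjoint (T.symm : X →L[ℝ] X) y, ?_⟩
      have := congrArg (fun f => f y) h1; simpa using this
  have hbbij : Function.Bijective (hbcoer.continuousLinearEquivOfBilin : X → X) :=
    hbcoer.continuousLinearEquivOfBilin.bijective
  constructor
  · intro u v huv
    apply hbbij.1
    rw [← hTdA, ← hTdA, huv]
  · intro y
    obtain ⟨x, hx⟩ := hbbij.2 (Td y)
    refine ⟨x, hTdbij.1 ?_⟩
    rw [hTdA, hx]
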